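/- Let P be a column-stochastic matrix of block upper-triangular form P = [[P_1, P_2], [0, P_3]], where P_1 is s × s column-stochastic, and suppose P_1^t → 1_s^T ⊗ ω for a probability vector ω and P_3^t → 0 as t → ∞. Then P_2-block of P^t converges to 1^T ⊗ ω as well, and hence P^t → 1^T ⊗ (ω, 0)^T, the rank-one matrix with all columns equal to the vector ω extended by zeros. -/

import Mathlib

open Filter Matrix

section aux
variable {n₁ n₂ : Type*} [Fintype n₁] [Fintype n₂] [DecidableEq n₁] [DecidableEq n₂]

private def stmt18B (P₁ : Matrix n₁ n₁ ℝ) (P₂ : Matrix n₁ n₂ ℝ) (P₃ : Matrix n₂ n₂ ℝ) :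
    ℕ → Matrix n₁ n₂ ℝ
  | 0 => 0
  | t + 1 => P₁ ^ t * P₂ + stmt18B P₁ P₂ P₃ t * P₃

private lemma stmt18_block (P₁ : Matrix n₁ n₁ ℝ) (P₂ : Matrix n₁ n₂ ℝ) (P₃ : Matrix n₂ n₂ ℝ) :
    ∀ t, (Matrix.fromBlocks P₁ P₂ 0 P₃) ^ t =
      Matrix.fromBlocks (P₁ ^ t) (stmt18B P₁ P₂ P₃ t) 0 (P₃ ^ t)
  | 0 => by simp [stmt18B, Matrix.fromBlocks_one]
  | t + 1 => by
    rw [pow_succ, stmt18_block P₁ P₂ P₃ t, Matrix.fromBlocks_multiply]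
    simp [stmt18B, pow_succ]

private lemma stmt18_split (P₁ : Matrix n₁ n₁ ℝ) (P₂ : Matrix n₁ n₂ ℝ) (P₃ : Matrix n₂ n₂ ℝ)
    (a b : ℕ) :
    stmt18B P₁ P₂ P₃ (a + b) =
      P₁ ^ a * stmt18B P₁ P₂ P₃ b + stmt18B P₁ P₂ P₃ a * P₃ ^ b := by
  have h := congrArg Matrix.toBlocks₁₂ (pow_add (Matrix.fromBlocks P₁ P₂ 0 P₃) a b)
  rw [stmt18_block, stmt18_block, stmt18_block, Matrix.fromBlocks_multiply] at h
  simpa using h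

end aux

theorem stmt18 {n₁ n₂ : Type*} [Fintype n₁] [Fintype n₂] [DecidableEq n₁] [DecidableEq n₂]
    (P₁ : Matrix n₁ n₁ ℝ) (P₂ : Matrix n₁ n₂ ℝ) (P₃ : Matrix n₂ n₂ ℝ)
    (P : Matrix (n₁ ⊕ n₂) (n₁ ⊕ n₂) ℝ)
    (hP : P = Matrix.fromBlocks P₁ P₂ 0 P₃)
    (hPnonneg : ∀ p q, 0 ≤ P p q) (hPstoch : ∀ q, ∑ p, P p q = 1)
    (hP₁stoch : (∀ j i, 0 ≤ P₁ j i) ∧ ∀ i, ∑ j, P₁ j i = 1)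
    (ω : n₁ → ℝ) (hω0 : ∀ j, 0 ≤ ω j) (hω1 : ∑ j, ω j = 1)
    (hP₁lim : Filter.Tendsto (fun t => P₁ ^ t) Filter.atTop
      (nhds (Matrix.of fun i _ => ω i)))
    (hP₃lim : Filter.Tendsto (fun t => P₃ ^ t) Filter.atTop (nhds 0)) :
    Filter.Tendsto (fun t => (P ^ t).toBlocks₁₂) Filter.atTop
        (nhds (Matrix.of fun i _ => ω i)) ∧
      Filter.Tendsto (fun t => P ^ t) Filter.atTop
        (nhds (Matrix.of fun p _ => Sum.elim ω (fun _ => 0) p)) := by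
  subst hP
  set Q := Matrix.fromBlocks P₁ P₂ 0 P₃ with hQ
  set B := stmt18B P₁ P₂ P₃ with hBdef
  have hblock : ∀ t, Q ^ t = Matrix.fromBlocks (P₁ ^ t) (B t) 0 (P₃ ^ t) :=
    stmt18_block P₁ P₂ P₃
  -- nonnegativity of powers
  have hnn : ∀ t p q, 0 ≤ (Q ^ t) p q := by
    intro t
    induction t with
    | zero => intro p q; by_cases h : p = q <;> simp [Matrix.one_apply, h]
    | succ t ih =>
      intro p q
      rw [pow_succ, Matrix.mul_apply]
      exact Finset.sum_nonneg fun r _ => mul_nonneg (ih p r) (hPnonneg r q)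
  -- column stochasticity of powers
  have hst : ∀ t q, ∑ p, (Q ^ t) p q = 1 := by
    intro t
    induction t with
    | zero => intro q; simp [Matrix.one_apply]
    | succ t ih =>
      intro q
      simp only [pow_succ, Matrix.mul_apply]
      rw [Finset.sum_comm]
      simp_rw [← Finset.sum_mul, ih, one_mul]
      exact hPstoch q
  have hentry : ∀ t i q, B t i q = (Q ^ t) (Sum.inl i) (Sum.inr q) := by
    intro t i q; rw [hblock t]; rfl
  have hentry3 : ∀ t j q, (P₃ ^ t) j q = (Q ^ t) (Sum.inr j) (Sum.inr q) := by
    intro t j q; rw [hblock t]; rfl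
  have hBnn : ∀ t i q, 0 ≤ B t i q := fun t i q => (hentry t i q) ▸ hnn t _ _
  have hP₃nn : ∀ t j q, 0 ≤ (P₃ ^ t) j q := fun t j q => (hentry3 t j q) ▸ hnn t _ _
  have hBle : ∀ t i q, B t i q ≤ 1 := by
    intro t i q
    rw [hentry t i q]
    calc (Q ^ t) (Sum.inl i) (Sum.inr q)
        ≤ ∑ p, (Q ^ t) p (Sum.inr q) :=
          Finset.single_le_sum (fun p _ => hnn t p (Sum.inr q)) (Finset.mem_univ _)
      _ = 1 := hst t _
  have hcol : ∀ η q, ∑ i, B η i q = 1 - ∑ j, (P₃ ^ η) j q := by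
    intro η q
    have h := hst η (Sum.inr q)
    rw [Fintype.sum_sum_type] at h
    simp only [← hentry, ← hentry3] at h
    linarith
  -- entrywise limits of hypotheses
  have hω' : ∀ i j, Tendsto (fun t => (P₁ ^ t) i j) atTop (nhds (ω i)) := by
    intro i j
    have h1 := tendsto_pi_nhds.mp hP₁lim i
    simpa using tendsto_pi_nhds.mp h1 j
  have h3' : ∀ j q, Tendsto (fun t => (P₃ ^ t) j q) atTop (nhds 0) := by
    intro j q
    have h1 := tendsto_pi_nhds.mp hP₃lim j
    simpa using tendsto_pi_nhds.mp h1 q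
  have hσ : ∀ q, Tendsto (fun η => ∑ j, (P₃ ^ η) j q) atTop (nhds 0) := by
    intro q
    simpa using tendsto_finset_sum (Finset.univ : Finset n₂) (fun j _ => h3' j q)
  have hωle : ∀ i, ω i ≤ 1 := by
    intro i
    calc ω i ≤ ∑ j, ω j := Finset.single_le_sum (fun j _ => hω0 j) (Finset.mem_univ _)
      _ = 1 := hω1
  -- main entrywise convergence of B
  have hmain : ∀ i q, Tendsto (fun t => B t i q) atTop (nhds (ω i)) := by
    intro i q
    rw [Metric.tendsto_atTop]
    intro ε hε
    obtain ⟨η, hη⟩ := Metric.tendsto_atTop.mp (hσ q) (ε / 4) (by linarith)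
    have hησ := hη η le_rfl
    rw [Real.dist_eq, sub_zero] at hησ
    set σ : ℝ := ∑ j, (P₃ ^ η) j q with hσdef
    have hσ0 : 0 ≤ σ := Finset.sum_nonneg fun j _ => hP₃nn η j q
    have hσε : σ < ε / 4 := by rwa [abs_of_nonneg hσ0] at hησ
    have hg : Tendsto (fun t => ∑ j, (P₁ ^ t) i j * B η j q) atTop
        (nhds (ω i * (1 - σ))) := by
      have := tendsto_finset_sum (Finset.univ : Finset n₁)
        (fun j _ => (hω' i j).mul_const (B η j q))
      rwa [← Finset.mul_sum, hcol η q] at this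
    obtain ⟨T, hT⟩ := Metric.tendsto_atTop.mp hg (ε / 4) (by linarith)
    refine ⟨T + η, fun s hs => ?_⟩
    have hs' : s - η + η = s := Nat.sub_add_cancel (le_trans (Nat.le_add_left η T) hs)
    set t := s - η with htdef
    have ht : T ≤ t := by omega
    have hTt := hT t ht
    rw [Real.dist_eq, abs_lt] at hTt
    have hsplit : B s i q = (∑ j, (P₁ ^ t) i j * B η j q) + ∑ j, B t i j * (P₃ ^ η) j q := by
      rw [← hs', hBdef, stmt18_split, Matrix.add_apply, Matrix.mul_apply, Matrix.mul_apply]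
    have hr0 : 0 ≤ ∑ j, B t i j * (P₃ ^ η) j q :=
      Finset.sum_nonneg fun j _ => mul_nonneg (hBnn t i j) (hP₃nn η j q)
    have hrσ : ∑ j, B t i j * (P₃ ^ η) j q ≤ σ := by
      rw [hσdef]
      refine Finset.sum_le_sum fun j _ => ?_
      calc B t i j * (P₃ ^ η) j q ≤ 1 * (P₃ ^ η) j q :=
            mul_le_mul_of_nonneg_right (hBle t i j) (hP₃nn η j q)
        _ = (P₃ ^ η) j q := one_mul _
    have hωσ0 : 0 ≤ ω i * σ := mul_nonneg (hω0 i) hσ0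
    have hωσ1 : ω i * σ ≤ σ := by nlinarith [hωle i, hω0 i]
    rw [Real.dist_eq, abs_lt, hsplit]
    constructor <;> nlinarith [hTt.1, hTt.2]
  constructor
  · have heq : (fun t => (Q ^ t).toBlocks₁₂) = fun t => B t := by
      funext t; rw [hblock t, Matrix.toBlocks_fromBlocks₁₂]
    rw [heq]; refine tendsto_pi_nhds.mpr ?_
    intro i
    refine tendsto_pi_nhds.mpr ?_
    intro q
    simpa using hmain i q
  · refine tendsto_pi_nhds.mpr ?_
    intro p
    refine tendsto_pi_nhds.mpr ?_
    intro q
    rcases p with i | j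
    · rcases q with j' | q'
      · have heq : ∀ t, (Q ^ t) (Sum.inl i) (Sum.inl j') = (P₁ ^ t) i j' := by
          intro t; rw [hblock t]; rfl
        have : Tendsto (fun t => (P₁ ^ t) i j') atTop (nhds (ω i)) := hω' i j'
        simpa [heq] using this
      · have : Tendsto (fun t => B t i q') atTop (nhds (ω i)) := hmain i q'
        simpa [hentry] using this
    · rcases q with j' | q'
      · have heq : ∀ t, (Q ^ t) (Sum.inr j) (Sum.inl j') = 0 := by
          intro t; rw [hblock t]; rfl
        set_option linter.unnecessarySimpa false in simpa [heq] using (tendsto_const_nhds : Tendsto (fun _ : ℕ => (0:ℝ)) atTop (nhds 0))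
      · have : Tendsto (fun t => (P₃ ^ t) j q') atTop (nhds 0) := h3' j q'
        simpa [hentry3] using this
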